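/- arXiv:1207.4026 — 3 statements merged into one kernel-verified Lean document; each statement's English description precedes it below -/
import Mathlib

section
/- Let X, Y ⊂ ℝ^N be compact, μ ∈ P(X) non-atomic, and let s : X → Y be a Borel map with s_#μ = ν. Let η = δ_{s(x)} ⊗ μ. If γ = f(x) ⊗ μ ∈ Π(μ,ν) satisfies f_#μ = (δ_{s(·)})_#μ (i.e., γ belongs to the transport class of η), then γ is induced by a transport map: γ = δ_{t(x)} ⊗ μ where t(x) = β(f(x)) = ∫_Y y df(x)(y) for μ-a.e. x. -/
open MeasureTheory

noncomputable instance {α : Type*} [MeasurableSpace α] [TopologicalSpace α]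
    [OpensMeasurableSpace α] : MeasurableSpace (ProbabilityMeasure α) := borel _

/-- The Dirac mass as a probability measure. -/
noncomputable def diracProb {Y : Type*} [MeasurableSpace Y] (y : Y) : ProbabilityMeasure Y :=
  ⟨Measure.dirac y, inferInstance⟩

/-- The plan `f(x) ⊗ μ` on `X × Y` with disintegration fibers `f x`. -/
noncomputable def plan {X Y : Type*} [MeasurableSpace X] [MeasurableSpace Y]
    (μ : Measure X) (f : X → ProbabilityMeasure Y) : Measure (X × Y) :=
  μ.bind fun x => ((f x : Measure Y)).map (Prod.mk x)

/-- Let `X, Y ⊆ ℝ^N` be compact, `μ ∈ P(X)` non-atomic, and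
`s : X → Y` Borel with `s_#μ = ν`; let `η = δ_{s(x)} ⊗ μ`.  If `γ = f(x) ⊗ μ ∈ Π(μ,ν)`
satisfies `f_#μ = (δ_{s(·)})_#μ` (i.e. `γ` is in the transport class of `η`), then `γ`
is induced by a transport map `t` with `t(x) = β(f(x)) = ∫_Y y d f(x)(y)` for μ-a.e. `x`:
`γ = δ_{t(x)} ⊗ μ`. -/
theorem stmt4 {N : ℕ} (X Y : Set (EuclideanSpace ℝ (Fin N)))
    (hX : IsCompact X) (hY : IsCompact Y)
    (μ : Measure X) [IsProbabilityMeasure μ] [NullSingletonClass μ]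
    (s : X → Y) (hs : Measurable s)
    (ν : Measure Y) (hν : μ.map s = ν)
    (f : X → ProbabilityMeasure Y) (hf : Measurable f)
    (hmarg : (plan μ f).map Prod.snd = ν)
    (hclass : μ.map f = μ.map (fun x => diracProb (s x))) :
    ∃ t : X → Y, Measurable t ∧
      (∀ᵐ x ∂μ, (t x : EuclideanSpace ℝ (Fin N)) =
        ∫ y, (y : EuclideanSpace ℝ (Fin N)) ∂(f x : Measure Y)) ∧
      plan μ (fun x => diracProb (t x)) = plan μ f := by
  classical
  -- notation
  have hdp : (diracProb : Y → ProbabilityMeasure Y) = diracProba := rfl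
  haveI : CompactSpace Y := isCompact_iff_compactSpace.mp hY
  haveI : BorelSpace (ProbabilityMeasure Y) := ⟨rfl⟩
  have hXne : Nonempty X := by
    rcases isEmpty_or_nonempty X with h | h
    · exfalso
      have h1 : μ Set.univ = 1 := measure_univ
      rw [Set.univ_eq_empty_iff.mpr h, measure_empty] at h1
      exact zero_ne_one h1
    · exact h
  haveI hYne : Nonempty Y := ⟨s (Classical.arbitrary X)⟩
  -- the set of Dirac measures is compact, hence closed and measurable
  set D : Set (ProbabilityMeasure Y) := Set.range (diracProba : Y → ProbabilityMeasure Y) with hD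
  have hDcompact : IsCompact D := isCompact_range continuous_diracProba
  have hDmeas : MeasurableSet D := hDcompact.isClosed.measurableSet
  -- the measurable inverse of diracProba
  set g : ProbabilityMeasure Y → Y := fun lam =>
    if h : lam ∈ D then diracProbaInverse ⟨lam, h⟩ else Classical.arbitrary Y with hg
  have hgmeas : Measurable g := by
    apply Measurable.dite (f := fun (p : {lam // lam ∈ D}) => diracProbaInverse p)
      (g := fun _ => Classical.arbitrary Y)
    · exact continuous_diracProbaEquivSymm.measurable
    · exact measurable_const
    · exact hDmeas
  set t : X → Y := fun x => g (f x) with ht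
  have htmeas : Measurable t := hgmeas.comp hf
  -- a.e., f x is a Dirac mass
  have hmemD : ∀ᵐ x ∂μ, f x ∈ D := by
    have hsd : Measurable fun x => diracProba (s x) :=
      (continuous_diracProba.measurable).comp hs
    have h0 : μ (f ⁻¹' Dᶜ) = 0 := by
      have h1 : μ (f ⁻¹' Dᶜ) = (μ.map f) Dᶜ :=
        (Measure.map_apply hf hDmeas.compl).symm
      rw [h1, hclass, hdp, Measure.map_apply hsd hDmeas.compl]
      have : (fun x => diracProba (s x)) ⁻¹' Dᶜ = ∅ := by
        ext x; simp [hD]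
      rw [this, measure_empty]
    exact h0
  have hfd : ∀ᵐ x ∂μ, f x = diracProba (t x) := by
    filter_upwards [hmemD] with x hx
    have : diracProba (t x) = f x := by
      simp only [ht, hg, dif_pos hx]
      exact diracProba_diracProbaInverse ⟨f x, hx⟩
    exact this.symm
  refine ⟨t, htmeas, ?_, ?_⟩
  · -- barycenter formula
    filter_upwards [hfd] with x hx
    rw [hx]
    have : ((diracProba (t x) : ProbabilityMeasure Y) : Measure Y) = Measure.dirac (t x) := rfl
    rw [this, integral_dirac]
  · -- equality of plans
    unfold plan
    have : (fun x => ((diracProb (t x) : Measure Y)).map (Prod.mk x)) =ᵐ[μ]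
        (fun x => ((f x : Measure Y)).map (Prod.mk x)) := by
      filter_upwards [hfd] with x hx
      rw [hx, hdp]
    rw [Measure.bind, Measure.bind, Measure.map_congr this]
end

section
/- Let Y be a compact metric space. The generalized barycenter map β : P(P(Y)) → P(Y), defined by β(N) = ∫_{P(Y)} λ dN(λ) (i.e., β(N)(B) = ∫_{P(Y)} λ(B) dN(λ)), is 1-Lipschitz with respect to the 1-Wasserstein distances: W(β(N₁), β(N₂)) ≤ W_{W}(N₁, N₂), where the distance on P(P(Y)) is the Wasserstein distance built on the metric space (P(Y), W). -/
open MeasureTheory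
open scoped ENNReal NNReal Topology BoundedContinuousFunction
open Filter

instance {α : Type*} [MeasurableSpace α] [TopologicalSpace α]
    [OpensMeasurableSpace α] : BorelSpace (ProbabilityMeasure α) := ⟨rfl⟩

/-- The 1-Wasserstein distance on `P(Y)` for a compact metric space `Y`, via
Kantorovich duality: `W(μ,ν) = sup { ∫ φ d(μ−ν) : φ ∈ Lip₁(Y) }`. -/
noncomputable def Wdist {Y : Type*} [MetricSpace Y] [MeasurableSpace Y]
    (μ ν : Measure Y) : ℝ :=
  ⨆ φ : {φ : Y → ℝ // LipschitzWith 1 φ}, (∫ y, φ.1 y ∂μ - ∫ y, φ.1 y ∂ν)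

/-- The 1-Wasserstein distance on `P(P(Y))` built on the metric space `(P(Y), W)`, via
Kantorovich duality: the supremum is over functionals which are 1-Lipschitz with respect
to the Wasserstein distance `W` on `P(Y)`. -/
noncomputable def WWdist {Y : Type*} [MetricSpace Y] [MeasurableSpace Y] [BorelSpace Y]
    (N₁ N₂ : Measure (ProbabilityMeasure Y)) : ℝ :=
  ⨆ φ : {φ : ProbabilityMeasure Y → ℝ //
      ∀ a b : ProbabilityMeasure Y, |φ a - φ b| ≤ Wdist (a : Measure Y) (b : Measure Y)},
    (∫ l, φ.1 l ∂N₁ - ∫ l, φ.1 l ∂N₂)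

section Aux

variable {Y : Type*} [MetricSpace Y] [CompactSpace Y] [MeasurableSpace Y] [BorelSpace Y]

/-- Diameter of the space. -/
noncomputable def auxD (Y : Type*) [MetricSpace Y] : ℝ := Metric.diam (Set.univ : Set Y)

lemma auxD_nonneg : 0 ≤ auxD Y := Metric.diam_nonneg

lemma lip_integrable {φ : Y → ℝ} (hφ : LipschitzWith 1 φ) (μ : Measure Y)
    [IsFiniteMeasure μ] : Integrable φ μ :=
  (BoundedContinuousFunction.mkOfCompact ⟨φ, hφ.continuous⟩).integrable μ

lemma dist_le_auxD (x y : Y) : dist x y ≤ auxD Y :=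
  Metric.dist_le_diam_of_mem (isCompact_univ.isBounded) (Set.mem_univ x) (Set.mem_univ y)

instance : Nonempty {φ : Y → ℝ // LipschitzWith 1 φ} :=
  ⟨⟨fun _ => 0, LipschitzWith.const' 0⟩⟩

lemma integral_sub_le_two_diam [Nonempty Y] {μ ν : Measure Y}
    [IsProbabilityMeasure μ] [IsProbabilityMeasure ν] {φ : Y → ℝ}
    (hφ : LipschitzWith 1 φ) :
    ∫ y, φ y ∂μ - ∫ y, φ y ∂ν ≤ 2 * auxD Y := by
  obtain ⟨y₀⟩ := ‹Nonempty Y›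
  have key : ∀ (ρ : Measure Y) [IsProbabilityMeasure ρ],
      |∫ y, φ y ∂ρ - φ y₀| ≤ auxD Y := by
    intro ρ hρ
    have h1 : ∫ y, φ y ∂ρ - φ y₀ = ∫ y, (φ y - φ y₀) ∂ρ := by
      rw [integral_sub (lip_integrable hφ ρ) (integrable_const _), integral_const,
        probReal_univ, one_smul]
    rw [h1]
    calc |∫ y, (φ y - φ y₀) ∂ρ| ≤ ∫ y, |φ y - φ y₀| ∂ρ := by
          simpa using norm_integral_le_integral_norm (μ := ρ) (fun y => φ y - φ y₀)
      _ ≤ ∫ _, auxD Y ∂ρ := by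
          apply integral_mono ((lip_integrable hφ ρ).sub (integrable_const _)).abs
            (integrable_const _)
          intro y
          calc |φ y - φ y₀| ≤ dist y y₀ := by
                simpa [Real.dist_eq] using hφ.dist_le_mul y y₀
            _ ≤ auxD Y := dist_le_auxD y y₀
      _ = auxD Y := by simp
  have hμ := abs_le.1 (key μ)
  have hν := abs_le.1 (key ν)
  linarith [hμ.2, hν.1]

lemma wdist_bddAbove [Nonempty Y] (μ ν : Measure Y) [IsProbabilityMeasure μ]
    [IsProbabilityMeasure ν] :
    BddAbove (Set.range fun φ : {φ : Y → ℝ // LipschitzWith 1 φ} =>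
      (∫ y, φ.1 y ∂μ - ∫ y, φ.1 y ∂ν)) := by
  refine ⟨2 * auxD Y, ?_⟩
  rintro x ⟨φ, rfl⟩
  exact integral_sub_le_two_diam φ.2

lemma le_wdist [Nonempty Y] {μ ν : Measure Y} [IsProbabilityMeasure μ]
    [IsProbabilityMeasure ν] {φ : Y → ℝ} (hφ : LipschitzWith 1 φ) :
    ∫ y, φ y ∂μ - ∫ y, φ y ∂ν ≤ Wdist μ ν :=
  le_ciSup (wdist_bddAbove μ ν) ⟨φ, hφ⟩

lemma wdist_nonneg [Nonempty Y] (μ ν : Measure Y) [IsProbabilityMeasure μ]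
    [IsProbabilityMeasure ν] : 0 ≤ Wdist μ ν := by
  have := le_wdist (μ := μ) (ν := ν) (LipschitzWith.const' (0 : ℝ))
  simpa using this

lemma wdist_le_two_diam [Nonempty Y] (μ ν : Measure Y) [IsProbabilityMeasure μ]
    [IsProbabilityMeasure ν] : Wdist μ ν ≤ 2 * auxD Y :=
  ciSup_le fun φ => integral_sub_le_two_diam φ.2

/-- Evaluation of probability measures at a measurable set is measurable for the Borel
σ-algebra of the weak topology. -/
lemma measurable_eval {s : Set Y} (hs : MeasurableSet s) :
    Measurable (fun l : ProbabilityMeasure Y => (l : Measure Y) s) := by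
  have h_eq : (inferInstance : MeasurableSpace Y)
      = MeasurableSpace.generateFrom {t : Set Y | IsClosed t} := by
    rw [BorelSpace.measurable_eq (α := Y), borel_eq_generateFrom_isClosed]
  revert s hs
  have h_empty : Measurable (fun l : ProbabilityMeasure Y => (l : Measure Y) (∅ : Set Y)) := by
    simp
  have h_basic : ∀ F ∈ {t : Set Y | IsClosed t},
      Measurable (fun l : ProbabilityMeasure Y => (l : Measure Y) F) := by
    intro F hF'
    -- evaluation at a closed set is a pointwise limit of continuous functions
    have hmeas : ∀ n : ℕ, Measurable (fun l : ProbabilityMeasure Y =>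
        ∫⁻ x, (hF'.apprSeq n x : ℝ≥0∞) ∂(l : Measure Y)) := by
      intro n
      have hc : Continuous (fun l : ProbabilityMeasure Y =>
          ((l.toFiniteMeasure.testAgainstNN (hF'.apprSeq n) : ℝ≥0) : ℝ≥0∞)) :=
        ENNReal.continuous_coe.comp
          ((FiniteMeasure.continuous_testAgainstNN_eval (hF'.apprSeq n)).comp
            ProbabilityMeasure.toFiniteMeasure_continuous)
      have heq : (fun l : ProbabilityMeasure Y =>
          ((l.toFiniteMeasure.testAgainstNN (hF'.apprSeq n) : ℝ≥0) : ℝ≥0∞))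
          = fun l : ProbabilityMeasure Y =>
            ∫⁻ x, (hF'.apprSeq n x : ℝ≥0∞) ∂(l : Measure Y) := by
      
        funext l
        rw [FiniteMeasure.testAgainstNN_coe_eq]
        rfl
      rw [heq] at hc
      exact hc.measurable
    have hlim : ∀ l : ProbabilityMeasure Y,
        Filter.Tendsto (fun n => ∫⁻ x, (hF'.apprSeq n x : ℝ≥0∞) ∂(l : Measure Y))
          Filter.atTop (𝓝 ((l : Measure Y) F)) := fun l =>
      HasOuterApproxClosed.tendsto_lintegral_apprSeq hF' (l : Measure Y)
    exact ENNReal.measurable_of_tendsto hmeas (tendsto_pi_nhds.mpr hlim)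
  have h_compl : ∀ t : Set Y, MeasurableSet t →
      Measurable (fun l : ProbabilityMeasure Y => (l : Measure Y) t) →
      Measurable (fun l : ProbabilityMeasure Y => (l : Measure Y) tᶜ) := by
    intro t htm iht
    have : (fun l : ProbabilityMeasure Y => (l : Measure Y) tᶜ)
        = fun l : ProbabilityMeasure Y => 1 - (l : Measure Y) t := by
      funext l
      exact prob_compl_eq_one_sub htm
    rw [this]
    exact Measurable.const_sub iht 1
  have h_union : ∀ f : ℕ → Set Y, Pairwise (Function.onFun Disjoint f) →
      (∀ i, MeasurableSet (f i)) →
      (∀ i, Measurable (fun l : ProbabilityMeasure Y => (l : Measure Y) (f i))) →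
      Measurable (fun l : ProbabilityMeasure Y => (l : Measure Y) (⋃ i, f i)) := by
    intro f hdisj hfm ihf
    have : (fun l : ProbabilityMeasure Y => (l : Measure Y) (⋃ i, f i))
        = fun l : ProbabilityMeasure Y => ∑' i, (l : Measure Y) (f i) := by
      funext l
      exact measure_iUnion hdisj hfm
    rw [this]
    exact Measurable.ennreal_tsum ihf
  exact fun s hs => MeasurableSpace.induction_on_inter h_eq
    (fun s hs t ht _ => hs.inter ht) h_empty h_basic h_compl h_union s hs

lemma measurable_toMeasure :
    Measurable (fun l : ProbabilityMeasure Y => (l : Measure Y)) :=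
  Measure.measurable_of_measurable_coe _ fun _ hs => measurable_eval hs

/-- The barycenter identity for bounded continuous functions. -/
lemma integral_bary {N : Measure (ProbabilityMeasure Y)} [IsProbabilityMeasure N]
    {ν : Measure Y} [IsProbabilityMeasure ν]
    (hb : ∀ s : Set Y, MeasurableSet s → ν s = ∫⁻ l, (l : Measure Y) s ∂N)
    (f : Y →ᵇ ℝ) :
    ∫ y, f y ∂ν = ∫ l, (∫ y, f y ∂(l : Measure Y)) ∂N := by
  have hbind : ν = N.bind (fun l : ProbabilityMeasure Y => (l : Measure Y)) := by
    ext s hs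
    rw [Measure.bind_apply hs measurable_toMeasure.aemeasurable, hb s hs]
  -- reduce to a nonnegative function
  set g : Y →ᵇ ℝ := f + BoundedContinuousFunction.const Y ‖f‖ with hg
  have hg_nonneg : ∀ y, 0 ≤ g y := by
    intro y
    have := abs_le.1 (f.norm_coe_le_norm y)
    simp only [hg, BoundedContinuousFunction.add_apply, BoundedContinuousFunction.const_apply]
    linarith [this.1]
  have hfg : ∀ (ρ : Measure Y) [IsProbabilityMeasure ρ],
      ∫ y, f y ∂ρ = ∫ y, g y ∂ρ - ‖f‖ := by
    intro ρ hρ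
    have : ∫ y, g y ∂ρ = ∫ y, f y ∂ρ + ‖f‖ := by
      simp only [hg, BoundedContinuousFunction.add_apply, BoundedContinuousFunction.const_apply]
      rw [integral_add (f.integrable ρ) (integrable_const _), integral_const, probReal_univ,
        one_smul]
    linarith
  -- the nonnegative case via lintegrals
  have hgmeas : Measurable fun y => ENNReal.ofReal (g y) :=
    ENNReal.measurable_ofReal.comp g.continuous.measurable
  have key : ∫ y, g y ∂ν = ∫ l, (∫ y, g y ∂(l : Measure Y)) ∂N := by
    have h1 : ∫ y, g y ∂ν = (∫⁻ y, ENNReal.ofReal (g y) ∂ν).toReal :=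
      integral_eq_lintegral_of_nonneg_ae (Filter.Eventually.of_forall hg_nonneg)
        g.continuous.measurable.aestronglyMeasurable
    have h2 : ∀ l : ProbabilityMeasure Y,
        ∫ y, g y ∂(l : Measure Y) = (∫⁻ y, ENNReal.ofReal (g y) ∂(l : Measure Y)).toReal :=
      fun l => integral_eq_lintegral_of_nonneg_ae (Filter.Eventually.of_forall hg_nonneg)
        g.continuous.measurable.aestronglyMeasurable
    have hH : Measurable fun l : ProbabilityMeasure Y =>
        ∫⁻ y, ENNReal.ofReal (g y) ∂(l : Measure Y) :=
      (Measure.measurable_lintegral hgmeas).comp measurable_toMeasure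
    have hbound : ∀ l : ProbabilityMeasure Y,
        ∫⁻ y, ENNReal.ofReal (g y) ∂(l : Measure Y) ≤ ENNReal.ofReal ‖g‖ := by
      intro l
      calc ∫⁻ y, ENNReal.ofReal (g y) ∂(l : Measure Y)
          ≤ ∫⁻ _, ENNReal.ofReal ‖g‖ ∂(l : Measure Y) := by
            apply lintegral_mono
            intro y
            exact ENNReal.ofReal_le_ofReal
              ((le_abs_self _).trans (g.norm_coe_le_norm y))
        _ = ENNReal.ofReal ‖g‖ := by simp
    have h3 : ∫ l, (∫ y, g y ∂(l : Measure Y)) ∂N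
        = (∫⁻ l, (∫⁻ y, ENNReal.ofReal (g y) ∂(l : Measure Y)) ∂N).toReal := by
      rw [← integral_toReal hH.aemeasurable]
      · exact integral_congr_ae (Filter.Eventually.of_forall fun l => h2 l)
      · exact Filter.Eventually.of_forall fun l =>
          lt_of_le_of_lt (hbound l) ENNReal.ofReal_lt_top
    rw [h1, h3, hbind, Measure.lintegral_bind measurable_toMeasure.aemeasurable hgmeas.aemeasurable]
  have hintg : Integrable (fun l : ProbabilityMeasure Y => ∫ y, g y ∂(l : Measure Y)) N := by
    have hcont : Continuous fun l : ProbabilityMeasure Y => ∫ y, g y ∂(l : Measure Y) :=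
      ProbabilityMeasure.continuous_integral_boundedContinuousFunction g
    apply (integrable_const ‖g‖).mono' hcont.measurable.aestronglyMeasurable
    refine Filter.Eventually.of_forall fun l => ?_
    exact g.norm_integral_le_norm (l : Measure Y)
  calc ∫ y, f y ∂ν = ∫ y, g y ∂ν - ‖f‖ := hfg ν
    _ = ∫ l, (∫ y, g y ∂(l : Measure Y)) ∂N - ‖f‖ := by rw [key]
    _ = ∫ l, ((∫ y, g y ∂(l : Measure Y)) - ‖f‖) ∂N := by
        rw [integral_sub hintg (integrable_const _), integral_const, probReal_univ,
          one_smul]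
    _ = ∫ l, (∫ y, f y ∂(l : Measure Y)) ∂N :=
        integral_congr_ae (Filter.Eventually.of_forall fun l => (hfg (l : Measure Y)).symm)

end Aux

section Key

variable {Y : Type*} [MetricSpace Y] [CompactSpace Y] [MeasurableSpace Y] [BorelSpace Y]
  [Nonempty Y]

/-- Weak convergence implies Wasserstein convergence (on a compact base space). -/
lemma tendsto_wdist (b : ProbabilityMeasure Y) :
    Filter.Tendsto (fun a : ProbabilityMeasure Y => Wdist (a : Measure Y) (b : Measure Y))
      (𝓝 b) (𝓝 0) := by
  rw [Metric.tendsto_nhds]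
  intro ε hε
  obtain ⟨y₀⟩ := ‹Nonempty Y›
  set A : Set (Y →ᵇ ℝ) := {f | LipschitzWith 1 ⇑f ∧ f y₀ = 0} with hA
  have hsub : ∀ (f : Y →ᵇ ℝ) (x : Y), f ∈ A → f x ∈ Set.Icc (-(auxD Y)) (auxD Y) := by
    rintro f x ⟨hf1, hf2⟩
    have : |f x| ≤ auxD Y := by
      have h := hf1.dist_le_mul x y₀
      rw [hf2] at h
      simp only [Real.dist_eq, sub_zero] at h
      simpa [Real.dist_eq] using h.trans (by simpa using dist_le_auxD x y₀)
    exact abs_le.1 this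
  have hequi : Equicontinuous ((↑) : A → Y → ℝ) := by
    intro x
    rw [Metric.equicontinuousAt_iff]
    intro δ hδ
    exact ⟨δ, hδ, fun y hy f => lt_of_le_of_lt (by simpa using f.2.1.dist_le_mul x y)
      (by simpa [dist_comm] using hy)⟩
  have hcomp : IsCompact (closure A) :=
    BoundedContinuousFunction.arzela_ascoli _ isCompact_Icc A hsub hequi
  have htb : TotallyBounded A := hcomp.totallyBounded.subset subset_closure
  obtain ⟨T, hTfin, hTcov⟩ := (Metric.totallyBounded_iff).1 htb (ε / 4) (by linarith)
  have hev : ∀ᶠ a : ProbabilityMeasure Y in 𝓝 b, ∀ t ∈ T,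
      |∫ x, t x ∂(a : Measure Y) - ∫ x, t x ∂(b : Measure Y)| < ε / 4 := by
    rw [Filter.eventually_all_finite hTfin]
    intro t _
    have hc := (ProbabilityMeasure.continuous_integral_boundedContinuousFunction
      (X := Y) t).tendsto b
    have := Metric.tendsto_nhds.1 hc (ε / 4) (by linarith)
    simpa [Real.dist_eq] using this
  filter_upwards [hev] with a ha
  rw [Real.dist_0_eq_abs, abs_of_nonneg (wdist_nonneg _ _)]
  have hle : Wdist (a : Measure Y) (b : Measure Y) ≤ 3 * (ε / 4) := by
    apply ciSup_le
    rintro ⟨φ, hφ⟩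
    set g : Y →ᵇ ℝ := BoundedContinuousFunction.mkOfCompact
      ⟨fun y => φ y - φ y₀, (hφ.continuous.sub continuous_const)⟩ with hgdef
    have hglip : LipschitzWith 1 (fun y => φ y - φ y₀) := fun x y => by
      rw [edist_sub_right]; exact hφ x y
    have hgA : g ∈ A := ⟨hglip, by simp [hgdef]⟩
    obtain ⟨t, htT, hgt⟩ := Set.mem_iUnion₂.1 (hTcov hgA)
    have hgt' : dist g t < ε / 4 := Metric.mem_ball.1 hgt
    have hshift : ∀ (ρ : Measure Y) [IsProbabilityMeasure ρ],
        ∫ y, g y ∂ρ = ∫ y, φ y ∂ρ - φ y₀ := by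
      intro ρ hρ
      show ∫ y, (φ y - φ y₀) ∂ρ = _
      rw [integral_sub (lip_integrable hφ ρ) (integrable_const _), integral_const,
        probReal_univ, one_smul]
    have hnear : ∀ (ρ : Measure Y) [IsProbabilityMeasure ρ],
        |∫ y, g y ∂ρ - ∫ y, t y ∂ρ| ≤ ε / 4 := by
      intro ρ hρ
      have : ∫ y, g y ∂ρ - ∫ y, t y ∂ρ = ∫ y, (g - t) y ∂ρ := by
        simp only [BoundedContinuousFunction.coe_sub, Pi.sub_apply]
        rw [integral_sub (g.integrable ρ) (t.integrable ρ)]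
      rw [this]
      calc |∫ y, (g - t) y ∂ρ| ≤ ‖g - t‖ := by
            simpa using (g - t).norm_integral_le_norm ρ
        _ ≤ ε / 4 := by
            rw [← dist_eq_norm]
            exact le_of_lt hgt'
    have e1 : ∫ y, φ y ∂(a : Measure Y) - ∫ y, φ y ∂(b : Measure Y)
        = ∫ y, g y ∂(a : Measure Y) - ∫ y, g y ∂(b : Measure Y) := by
      rw [hshift (a : Measure Y), hshift (b : Measure Y)]
      ring
    have h1 := abs_le.1 (hnear (a : Measure Y))
    have h2 := abs_le.1 (hnear (b : Measure Y))
    have h3 := abs_le.1 (le_of_lt (ha t htT))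
    show ∫ y, φ y ∂(a : Measure Y) - ∫ y, φ y ∂(b : Measure Y) ≤ 3 * (ε / 4)
    rw [e1]
    linarith [h1.2, h2.1, h3.2, h1.1, h2.2, h3.1]
  linarith

/-- A function that is 1-Lipschitz for `Wdist` is continuous for the weak topology. -/
lemma cont_of_wlip {ψ : ProbabilityMeasure Y → ℝ}
    (hψ : ∀ a b : ProbabilityMeasure Y, |ψ a - ψ b| ≤ Wdist (a : Measure Y) (b : Measure Y)) :
    Continuous ψ := by
  rw [continuous_iff_continuousAt]
  intro b
  rw [ContinuousAt, tendsto_iff_dist_tendsto_zero]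
  exact squeeze_zero (fun a => dist_nonneg)
    (fun a => by rw [Real.dist_eq]; exact hψ a b) (tendsto_wdist b)

lemma wwdist_elem_le (N₁ N₂ : Measure (ProbabilityMeasure Y))
    [IsProbabilityMeasure N₁] [IsProbabilityMeasure N₂]
    {ψ : ProbabilityMeasure Y → ℝ}
    (hψ : ∀ a b : ProbabilityMeasure Y, |ψ a - ψ b| ≤ Wdist (a : Measure Y) (b : Measure Y)) :
    ∫ l, ψ l ∂N₁ - ∫ l, ψ l ∂N₂ ≤ 4 * auxD Y := by
  obtain ⟨y₀⟩ := ‹Nonempty Y›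
  have hdirac : IsProbabilityMeasure (Measure.dirac y₀) := inferInstance
  set l₀ : ProbabilityMeasure Y := ⟨Measure.dirac y₀, hdirac⟩ with hl₀
  set c : ℝ := ψ l₀ with hc
  have hbnd : ∀ l : ProbabilityMeasure Y, |ψ l - c| ≤ 2 * auxD Y := fun l =>
    (hψ l l₀).trans (wdist_le_two_diam _ _)
  have hcont : Continuous ψ := cont_of_wlip hψ
  have hint : ∀ (N : Measure (ProbabilityMeasure Y)) [IsProbabilityMeasure N],
      Integrable ψ N := by
    intro N hN
    apply (integrable_const (2 * auxD Y + |c|)).mono' hcont.measurable.aestronglyMeasurable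
    refine Filter.Eventually.of_forall fun l => ?_
    calc ‖ψ l‖ = |ψ l - c + c| := by rw [Real.norm_eq_abs]; congr 1; ring
      _ ≤ |ψ l - c| + |c| := abs_add_le _ _
      _ ≤ 2 * auxD Y + |c| := by linarith [hbnd l]
  have hpart : ∀ (N : Measure (ProbabilityMeasure Y)) [IsProbabilityMeasure N],
      |∫ l, ψ l ∂N - c| ≤ 2 * auxD Y := by
    intro N hN
    have h1 : ∫ l, ψ l ∂N - c = ∫ l, (ψ l - c) ∂N := by
      rw [integral_sub (hint N) (integrable_const _), integral_const, probReal_univ,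
        one_smul]
    rw [h1]
    calc |∫ l, (ψ l - c) ∂N| ≤ ∫ l, |ψ l - c| ∂N := by
          simpa using norm_integral_le_integral_norm (μ := N) (fun l => ψ l - c)
      _ ≤ ∫ _, 2 * auxD Y ∂N := integral_mono ((hint N).sub (integrable_const _)).abs
          (integrable_const _) (fun l => hbnd l)
      _ = 2 * auxD Y := by simp
  have h1 := abs_le.1 (hpart N₁)
  have h2 := abs_le.1 (hpart N₂)
  linarith [h1.2, h2.1]

end Key

/-- For a compact metric space `Y`, the generalized barycenter map
`β : P(P(Y)) → P(Y)`, `β(N)(B) = ∫_{P(Y)} λ(B) dN(λ)`, is 1-Lipschitz for the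
1-Wasserstein distances: `W(β(N₁), β(N₂)) ≤ W_W(N₁, N₂)`. -/
theorem stmt7 {Y : Type*} [MetricSpace Y] [CompactSpace Y] [MeasurableSpace Y] [BorelSpace Y]
    (N₁ N₂ : Measure (ProbabilityMeasure Y))
    [IsProbabilityMeasure N₁] [IsProbabilityMeasure N₂]
    (ν₁ ν₂ : Measure Y) [IsProbabilityMeasure ν₁] [IsProbabilityMeasure ν₂]
    (hb₁ : ∀ s : Set Y, MeasurableSet s → ν₁ s = ∫⁻ l, (l : Measure Y) s ∂N₁)
    (hb₂ : ∀ s : Set Y, MeasurableSet s → ν₂ s = ∫⁻ l, (l : Measure Y) s ∂N₂) :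
    Wdist ν₁ ν₂ ≤ WWdist N₁ N₂ := by
  rcases isEmpty_or_nonempty Y with hY | hY
  · exfalso
    have h1 : ν₁ Set.univ = 1 := measure_univ
    rw [Set.univ_eq_empty_iff.mpr hY, measure_empty] at h1
    exact zero_ne_one h1
  · apply ciSup_le
    rintro ⟨φ, hφ⟩
    let f : Y →ᵇ ℝ := BoundedContinuousFunction.mkOfCompact ⟨φ, hφ.continuous⟩
    have hΦ : ∀ a b : ProbabilityMeasure Y,
        |(∫ y, φ y ∂(a : Measure Y)) - ∫ y, φ y ∂(b : Measure Y)|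
          ≤ Wdist (a : Measure Y) (b : Measure Y) := by
      intro a b
      rw [abs_sub_le_iff]
      refine ⟨le_wdist hφ, ?_⟩
      have h := le_wdist (μ := (a : Measure Y)) (ν := (b : Measure Y)) hφ.neg
      simp only [Pi.neg_apply, integral_neg] at h
      linarith
    have e₁ : ∫ y, f y ∂ν₁ = ∫ l, (∫ y, f y ∂(l : Measure Y)) ∂N₁ := integral_bary hb₁ f
    have e₂ : ∫ y, f y ∂ν₂ = ∫ l, (∫ y, f y ∂(l : Measure Y)) ∂N₂ := integral_bary hb₂ f
    show ∫ y, f y ∂ν₁ - ∫ y, f y ∂ν₂ ≤ WWdist N₁ N₂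
    rw [e₁, e₂]
    have hbdd : BddAbove (Set.range fun ψ : {ψ : ProbabilityMeasure Y → ℝ //
        ∀ a b : ProbabilityMeasure Y, |ψ a - ψ b| ≤ Wdist (a : Measure Y) (b : Measure Y)} =>
        (∫ l, ψ.1 l ∂N₁ - ∫ l, ψ.1 l ∂N₂)) := by
      refine ⟨4 * auxD Y, ?_⟩
      rintro x ⟨ψ, rfl⟩
      exact wwdist_elem_le N₁ N₂ ψ.2
    exact le_ciSup hbdd ⟨fun l => ∫ y, φ y ∂(l : Measure Y), hΦ⟩
end

section
/- Let X, Y be compact metric spaces, c : X × Y → ℝ continuous, μ ∈ P(X), and ν = Σᵢ aᵢ δ_{yᵢ} a finitely supported probability measure on Y with distinct atoms yᵢ. Suppose μ is c-continuous, i.e., μ({x : c(x,yᵢ) − c(x,yⱼ) = λ}) = 0 for all i ≠ j and all λ ∈ ℝ. Then every optimal transport plan γ for MK(c,μ,ν) is induced by a transport map: γ = (Id × t)_#μ for some Borel t : X → Y with t_#μ = ν. -/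
open MeasureTheory
open scoped ENNReal

lemma cont_integrable {Z : Type*} [MetricSpace Z] [CompactSpace Z] [MeasurableSpace Z]
    [BorelSpace Z] {f : Z → ℝ} (hf : Continuous f) (θ : Measure Z) [IsFiniteMeasure θ] :
    Integrable f θ := by
  have := hf.continuousOn.integrableOn_compact (isCompact_univ) (μ := θ)
  rwa [integrableOn_univ] at this

lemma swap_lemma {X Y : Type*}
    [MetricSpace X] [CompactSpace X] [MeasurableSpace X] [BorelSpace X]
    [MetricSpace Y] [CompactSpace Y] [MeasurableSpace Y] [BorelSpace Y]
    (c : X → Y → ℝ) (hc : Continuous fun p : X × Y => c p.1 p.2)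
    (μ : Measure X) [IsProbabilityMeasure μ]
    (ν : Measure Y)
    (γ : Measure (X × Y)) (hγ₁ : γ.map Prod.fst = μ) (hγ₂ : γ.map Prod.snd = ν)
    (hopt : ∀ γ' : Measure (X × Y), γ'.map Prod.fst = μ → γ'.map Prod.snd = ν →
      (∫ p, c p.1 p.2 ∂γ) ≤ ∫ p, c p.1 p.2 ∂γ')
    (b b' : Y) (κ κ' : Measure X) [IsFiniteMeasure κ] [IsFiniteMeasure κ']
    (hle : κ.map (fun x => (x, b)) + κ'.map (fun x => (x, b')) ≤ γ)
    {P Q : Set X} (hP : MeasurableSet P) (hQ : MeasurableSet Q)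
    {r1 r2 : ℝ} (hr : r1 < r2)
    (hfP : ∀ x ∈ P, r2 ≤ c x b - c x b')
    (hfQ : ∀ x ∈ Q, c x b - c x b' ≤ r1) :
    κ P = 0 ∨ κ' Q = 0 := by
  by_contra hcon
  push_neg at hcon
  obtain ⟨hκP, hκ'Q⟩ := hcon
  have hγfin : IsFiniteMeasure γ := by
    constructor
    have : γ Set.univ = μ Set.univ := by
      rw [← hγ₁, Measure.map_apply measurable_fst MeasurableSet.univ]; rfl
    rw [this]; exact measure_lt_top μ _
  have hκPfin : κ P ≠ ∞ := (measure_lt_top κ P).ne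
  have hκ'Qfin : κ' Q ≠ ∞ := (measure_lt_top κ' Q).ne
  set m : ℝ≥0∞ := min (κ P) (κ' Q) with hm
  have hm0 : m ≠ 0 := by
    have h1 : 0 < κ P := pos_iff_ne_zero.mpr hκP
    have h2 : 0 < κ' Q := pos_iff_ne_zero.mpr hκ'Q
    exact (lt_min h1 h2).ne'
  have hmtop : m ≠ ∞ := ne_top_of_le_ne_top hκPfin (min_le_left _ _)
  set α : Measure X := (m / κ P) • κ.restrict P with hα
  set β : Measure X := (m / κ' Q) • κ'.restrict Q with hβ
  have hαuniv : α Set.univ = m := by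
    rw [hα, Measure.smul_apply, smul_eq_mul, Measure.restrict_apply MeasurableSet.univ,
      Set.univ_inter, ENNReal.div_mul_cancel hκP hκPfin]
  have hβuniv : β Set.univ = m := by
    rw [hβ, Measure.smul_apply, smul_eq_mul, Measure.restrict_apply MeasurableSet.univ,
      Set.univ_inter, ENNReal.div_mul_cancel hκ'Q hκ'Qfin]
  have hακ : α ≤ κ := by
    intro s
    have h1 : m / κ P ≤ 1 := ENNReal.div_le_of_le_mul (by rw [one_mul]; exact min_le_left _ _)
    calc α s = m / κ P * κ.restrict P s := by rw [hα, Measure.smul_apply, smul_eq_mul]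
    _ ≤ 1 * κ s := mul_le_mul' h1 (Measure.restrict_le_self s)
    _ = κ s := one_mul _
  have hβκ : β ≤ κ' := by
    intro s
    have h1 : m / κ' Q ≤ 1 := ENNReal.div_le_of_le_mul (by rw [one_mul]; exact min_le_right _ _)
    calc β s = m / κ' Q * κ'.restrict Q s := by rw [hβ, Measure.smul_apply, smul_eq_mul]
    _ ≤ 1 * κ' s := mul_le_mul' h1 (Measure.restrict_le_self s)
    _ = κ' s := one_mul _
  have hαfin : IsFiniteMeasure α := isFiniteMeasure_of_le κ hακ
  have hβfin : IsFiniteMeasure β := isFiniteMeasure_of_le κ' hβκ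
  have hmk : ∀ z : Y, Measurable fun x : X => (x, z) :=
    fun z => measurable_id.prodMk measurable_const
  have hib : Measurable fun x : X => (x, b) := hmk b
  have hib' : Measurable fun x : X => (x, b') := hmk b'
  set δ : Measure (X × Y) := α.map (fun x => (x, b)) + β.map (fun x => (x, b')) with hδ
  have hδγ : δ ≤ γ :=
    le_trans (add_le_add (Measure.map_mono hακ hib) (Measure.map_mono hβκ hib')) hle
  have hδfin : IsFiniteMeasure δ := isFiniteMeasure_of_le γ hδγ
  set γ' : Measure (X × Y) := (γ - δ) + (β.map (fun x => (x, b)) + α.map (fun x => (x, b'))) with hγ'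
  have hcancel : (γ - δ) + δ = γ := Measure.sub_add_cancel_of_le hδγ
  -- first marginal
  have hmapfst : ∀ (θ : Measure X) (z : Y), (θ.map (fun x => (x, z))).map Prod.fst = θ := by
    intro θ z
    rw [Measure.map_map measurable_fst (hmk z)]
    simp [Function.comp_def]
  have hγ'1 : γ'.map Prod.fst = μ := by
    have h1 : γ.map Prod.fst = (γ - δ).map Prod.fst + (α + β) := by
      conv_lhs => rw [← hcancel]
      rw [Measure.map_add _ _ measurable_fst, hδ, Measure.map_add _ _ measurable_fst,
        hmapfst, hmapfst]
    rw [hγ', Measure.map_add _ _ measurable_fst, Measure.map_add _ _ measurable_fst,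
      hmapfst, hmapfst, ← hγ₁, h1]
    abel
  -- second marginal
  have hmapsnd : ∀ (θ : Measure X) (z : Y), (θ.map (fun x => (x, z))).map Prod.snd
      = θ Set.univ • Measure.dirac z := by
    intro θ z
    rw [Measure.map_map measurable_snd (hmk z)]
    exact Measure.map_const θ z
  have hγ'2 : γ'.map Prod.snd = ν := by
    have h1 : γ.map Prod.snd = (γ - δ).map Prod.snd
        + (m • Measure.dirac b + m • Measure.dirac b') := by
      conv_lhs => rw [← hcancel]
      rw [Measure.map_add _ _ measurable_snd, hδ, Measure.map_add _ _ measurable_snd,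
        hmapsnd, hmapsnd, hαuniv, hβuniv]
    rw [hγ', Measure.map_add _ _ measurable_snd, Measure.map_add _ _ measurable_snd,
      hmapsnd, hmapsnd, hαuniv, hβuniv, ← hγ₂, h1]
  -- integrability
  have hint : ∀ (θ : Measure (X × Y)) [IsFiniteMeasure θ], Integrable (fun p : X × Y => c p.1 p.2) θ :=
    fun θ _ => cont_integrable hc θ
  have hsubfin : IsFiniteMeasure (γ - δ) := isFiniteMeasure_of_le γ (Measure.sub_le)
  have hmapαfin : IsFiniteMeasure (α.map (fun x => (x, b))) := by
    constructor
    rw [Measure.map_apply hib MeasurableSet.univ]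
    exact measure_lt_top α _
  have hmapα'fin : IsFiniteMeasure (α.map (fun x => (x, b'))) := by
    constructor
    rw [Measure.map_apply hib' MeasurableSet.univ]
    exact measure_lt_top α _
  have hmapβfin : IsFiniteMeasure (β.map (fun x => (x, b))) := by
    constructor
    rw [Measure.map_apply hib MeasurableSet.univ]
    exact measure_lt_top β _
  have hmapβ'fin : IsFiniteMeasure (β.map (fun x => (x, b'))) := by
    constructor
    rw [Measure.map_apply hib' MeasurableSet.univ]
    exact measure_lt_top β _
  -- cost comparison
  have hintmap : ∀ (θ : Measure X) [IsFiniteMeasure θ] (z : Y),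
      (∫ p : X × Y, c p.1 p.2 ∂(θ.map (fun x => (x, z)))) = ∫ x, c x z ∂θ := by
    intro θ _ z
    rw [integral_map (hmk z).aemeasurable
      hc.aestronglyMeasurable]
  have hcostγ : (∫ p : X × Y, c p.1 p.2 ∂γ)
      = (∫ p : X × Y, c p.1 p.2 ∂(γ - δ)) + ((∫ x, c x b ∂α) + ∫ x, c x b' ∂β) := by
    conv_lhs => rw [← hcancel]
    rw [integral_add_measure (hint _) (hint _), hδ, integral_add_measure (hint _) (hint _),
      hintmap, hintmap]
  have hcostγ' : (∫ p : X × Y, c p.1 p.2 ∂γ')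
      = (∫ p : X × Y, c p.1 p.2 ∂(γ - δ)) + ((∫ x, c x b ∂β) + ∫ x, c x b' ∂α) := by
    rw [hγ', integral_add_measure (hint _) (hint _), integral_add_measure (hint _) (hint _),
      hintmap, hintmap]
  have hle2 := hopt γ' hγ'1 hγ'2
  rw [hcostγ, hcostγ'] at hle2
  have hle3 : (∫ x, c x b ∂α) + ∫ x, c x b' ∂β ≤ (∫ x, c x b ∂β) + ∫ x, c x b' ∂α := by
    linarith
  -- integrals of f := c x b - c x b'
  have hcb : Continuous fun x : X => c x b := hc.comp (continuous_id.prodMk continuous_const)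
  have hcb' : Continuous fun x : X => c x b' := hc.comp (continuous_id.prodMk continuous_const)
  have hf : Continuous fun x : X => c x b - c x b' := hcb.sub hcb'
  have haeP : ∀ᵐ x ∂α, x ∈ P := by
    rw [hα]
    exact (Measure.ae_smul_measure (ae_restrict_mem hP) _)
  have haeQ : ∀ᵐ x ∂β, x ∈ Q := by
    rw [hβ]
    exact (Measure.ae_smul_measure (ae_restrict_mem hQ) _)
  have hlow : r2 * m.toReal ≤ ∫ x, (c x b - c x b') ∂α := by
    have := integral_mono_ae (integrable_const r2) (cont_integrable hf α)
      (haeP.mono fun x hx => hfP x hx)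
    rwa [integral_const, measureReal_def, hαuniv, smul_eq_mul, mul_comm] at this
  have hhigh : (∫ x, (c x b - c x b') ∂β) ≤ r1 * m.toReal := by
    have := integral_mono_ae (cont_integrable hf β) (integrable_const r1)
      (haeQ.mono fun x hx => hfQ x hx)
    rwa [integral_const, measureReal_def, hβuniv, smul_eq_mul, mul_comm] at this
  rw [integral_sub (cont_integrable hcb α) (cont_integrable hcb' α)] at hlow
  rw [integral_sub (cont_integrable hcb β) (cont_integrable hcb' β)] at hhigh
  have hmpos : 0 < m.toReal := ENNReal.toReal_pos hm0 hmtop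
  nlinarith

lemma pair_lemma {X Y : Type*}
    [MetricSpace X] [CompactSpace X] [MeasurableSpace X] [BorelSpace X]
    [MetricSpace Y] [CompactSpace Y] [MeasurableSpace Y] [BorelSpace Y]
    (c : X → Y → ℝ) (hc : Continuous fun p : X × Y => c p.1 p.2)
    (μ : Measure X) [IsProbabilityMeasure μ]
    (ν : Measure Y)
    (γ : Measure (X × Y)) (hγ₁ : γ.map Prod.fst = μ) (hγ₂ : γ.map Prod.snd = ν)
    (hopt : ∀ γ' : Measure (X × Y), γ'.map Prod.fst = μ → γ'.map Prod.snd = ν →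
      (∫ p, c p.1 p.2 ∂γ) ≤ ∫ p, c p.1 p.2 ∂γ')
    (b b' : Y) (κ κ' : Measure X) [IsFiniteMeasure κ] [IsFiniteMeasure κ']
    (hle : κ.map (fun x => (x, b)) + κ'.map (fun x => (x, b')) ≤ γ)
    (hκnull : ∀ l : ℝ, κ {x | c x b - c x b' = l} = 0)
    (hκ'null : ∀ l : ℝ, κ' {x | c x b - c x b' = l} = 0) :
    ∃ l : ℝ, κ {x | l ≤ c x b - c x b'} = 0 ∧ κ' {x | c x b - c x b' ≤ l} = 0 := by
  set f : X → ℝ := fun x => c x b - c x b' with hfdef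
  have hf : Continuous f :=
    (hc.comp (continuous_id.prodMk continuous_const)).sub
      (hc.comp (continuous_id.prodMk continuous_const))
  obtain ⟨C, hC⟩ : ∃ C : ℝ, ∀ x ∈ (Set.univ : Set X), ‖f x‖ ≤ C :=
    isCompact_univ.exists_bound_of_continuousOn hf.continuousOn
  have hCbound : ∀ x : X, -C ≤ f x ∧ f x ≤ C := by
    intro x
    have := hC x (Set.mem_univ x)
    rw [Real.norm_eq_abs, abs_le] at this
    exact this
  by_cases hκ0 : κ Set.univ = 0
  · refine ⟨-(C+1), ?_, ?_⟩
    · exact le_antisymm (le_trans (measure_mono (Set.subset_univ _)) hκ0.le) (zero_le)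
    · have : {x | f x ≤ -(C+1)} = ∅ := by
        ext x
        simp only [Set.mem_setOf_eq, Set.mem_empty_iff_false, iff_false, not_le]
        linarith [(hCbound x).1]
      rw [this]; exact measure_empty
  -- main case
  set S : Set ℝ := {r | κ {x | r < f x} = 0} with hS
  have hCS : C ∈ S := by
    have : {x | C < f x} = ∅ := by
      ext x
      simp only [Set.mem_setOf_eq, Set.mem_empty_iff_false, iff_false, not_lt]
      exact (hCbound x).2
    simp only [hS, Set.mem_setOf_eq, this, measure_empty]
  have hSne : S.Nonempty := ⟨C, hCS⟩
  have hSbdd : BddBelow S := by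
    refine ⟨-C - 1, fun r hr => ?_⟩
    by_contra hr2
    push_neg at hr2
    have : {x | r < f x} = Set.univ := by
      ext x
      simp only [Set.mem_setOf_eq, Set.mem_univ, iff_true]
      linarith [(hCbound x).1]
    rw [hS, Set.mem_setOf_eq, this] at hr
    exact hκ0 hr
  set L : ℝ := sInf S with hL
  have hSup : ∀ r, L < r → κ {x | r < f x} = 0 := by
    intro r hr
    obtain ⟨r', hr'S, hr'⟩ := exists_lt_of_csInf_lt hSne hr
    refine le_antisymm (le_trans (measure_mono ?_) hr'S.le) (zero_le)
    intro x hx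
    exact lt_trans hr' hx
  have ha : κ {x | L ≤ f x} = 0 := by
    have h1 : κ {x | L < f x} = 0 := by
      have hcover : {x | L < f x} ⊆ ⋃ n : ℕ, {x | L + 1/(n+1) < f x} := by
        intro x hx
        simp only [Set.mem_setOf_eq] at hx
        obtain ⟨n, hn⟩ := exists_nat_one_div_lt (show (0:ℝ) < f x - L by linarith)
        exact Set.mem_iUnion.mpr ⟨n, by simp only [Set.mem_setOf_eq]; push_cast; linarith⟩
      refine le_antisymm (le_trans (measure_mono hcover) ?_) (zero_le)
      rw [measure_iUnion_null_iff.mpr]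
      intro n
      exact hSup _ (lt_add_of_pos_right L (by positivity))
    have h2 : {x | L ≤ f x} ⊆ {x | L < f x} ∪ {x | f x = L} := by
      intro x hx
      rcases eq_or_lt_of_le (Set.mem_setOf_eq ▸ hx) with h | h
      · exact Or.inr h.symm
      · exact Or.inl h
    exact le_antisymm (le_trans (measure_mono h2)
      (le_trans (measure_union_le _ _) (by rw [h1, hκnull L, add_zero]))) (zero_le)
  have hb : κ' {x | f x ≤ L} = 0 := by
    have h1 : ∀ r : ℝ, r < L → κ' {x | f x ≤ r} = 0 := by
      intro r hr
      set r2 : ℝ := (r + L) / 2 with hr2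
      have hrr2 : r < r2 := by rw [hr2]; linarith
      have hr2L : r2 < L := by rw [hr2]; linarith
      have hP : κ {x | r2 ≤ f x} ≠ 0 := by
        intro h0
        have hr2S : r2 ∈ S := by
          rw [hS, Set.mem_setOf_eq]
          refine le_antisymm (le_trans (measure_mono ?_) h0.le) (zero_le)
          intro x hx
          exact le_of_lt (Set.mem_setOf_eq ▸ hx)
        exact absurd (csInf_le hSbdd hr2S) (not_le.mpr hr2L)
      have := swap_lemma c hc μ ν γ hγ₁ hγ₂ hopt b b' κ κ' hle
        (measurableSet_le measurable_const hf.measurable)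
        (measurableSet_le hf.measurable measurable_const)
        hrr2 (fun x hx => hx) (fun x hx => hx)
      rcases this with h | h
      · exact absurd h hP
      · exact h
    have hcover : {x | f x < L} ⊆ ⋃ n : ℕ, {x | f x ≤ L - 1/(n+1)} := by
      intro x hx
      simp only [Set.mem_setOf_eq] at hx
      obtain ⟨n, hn⟩ := exists_nat_one_div_lt (show (0:ℝ) < L - f x by linarith)
      refine Set.mem_iUnion.mpr ⟨n, ?_⟩
      simp only [Set.mem_setOf_eq]
      push_cast
      linarith
    have h2 : κ' {x | f x < L} = 0 := by
      refine le_antisymm (le_trans (measure_mono hcover) ?_) (zero_le)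
      rw [measure_iUnion_null_iff.mpr]
      intro n
      exact h1 _ (sub_lt_self L (by positivity))
    have h3 : {x | f x ≤ L} ⊆ {x | f x < L} ∪ {x | f x = L} := by
      intro x hx
      rcases eq_or_lt_of_le (Set.mem_setOf_eq ▸ hx) with h | h
      · exact Or.inr h
      · exact Or.inl h
    exact le_antisymm (le_trans (measure_mono h3)
      (le_trans (measure_union_le _ _) (by rw [h2, hκ'null L, add_zero]))) (zero_le)
  exact ⟨L, ha, hb⟩

lemma map_finset_sum' {α β : Type*} [MeasurableSpace α] [MeasurableSpace β]
    {f : α → β} (hf : Measurable f) {ι : Type*} (s : Finset ι) (μ : ι → Measure α) :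
    (∑ i ∈ s, μ i).map f = ∑ i ∈ s, (μ i).map f := by
  classical
  induction s using Finset.induction with
  | empty => simp
  | insert a s ha ih =>
    rw [Finset.sum_insert ha, Measure.map_add _ _ hf, ih, Finset.sum_insert ha]

/-- Let `X, Y` be compact metric, `c` continuous, `μ ∈ P(X)` and
`ν = Σᵢ aᵢ δ_{yᵢ}` finitely supported with distinct atoms.  If `μ` is `c`-continuous
(`μ{x : c(x,yᵢ) − c(x,yⱼ) = λ} = 0` for `i ≠ j`), then every optimal plan `γ` for
`MK(c,μ,ν)` is induced by a transport map: `γ = (Id × t)_#μ` with `t_#μ = ν`. -/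
theorem stmt16 {X Y : Type*}
    [MetricSpace X] [CompactSpace X] [MeasurableSpace X] [BorelSpace X]
    [MetricSpace Y] [CompactSpace Y] [MeasurableSpace Y] [BorelSpace Y]
    (c : X → Y → ℝ) (hc : Continuous fun p : X × Y => c p.1 p.2)
    (μ : Measure X) [IsProbabilityMeasure μ]
    {ι : Type*} [Fintype ι] (a : ι → ℝ≥0∞) (y : ι → Y) (hy : Function.Injective y)
    (ν : Measure Y) [IsProbabilityMeasure ν]
    (hν : ν = ∑ i : ι, a i • Measure.dirac (y i))
    (hccont : ∀ i j : ι, i ≠ j → ∀ l : ℝ, μ {x | c x (y i) - c x (y j) = l} = 0)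
    (γ : Measure (X × Y)) (hγ₁ : γ.map Prod.fst = μ) (hγ₂ : γ.map Prod.snd = ν)
    (hopt : ∀ γ' : Measure (X × Y), γ'.map Prod.fst = μ → γ'.map Prod.snd = ν →
      (∫ p, c p.1 p.2 ∂γ) ≤ ∫ p, c p.1 p.2 ∂γ') :
    ∃ t : X → Y, Measurable t ∧ μ.map t = ν ∧ γ = μ.map fun x => (x, t x) := by
  classical
  have hι : Nonempty ι := by
    by_contra h
    rw [not_nonempty_iff] at h
    have h1 : ν Set.univ = 1 := measure_univ
    rw [hν] at h1
    simp [Finset.univ_eq_empty] at h1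
  have hmk : ∀ z : Y, Measurable fun x : X => (x, z) :=
    fun z => measurable_id.prodMk measurable_const
  set T : ι → Set (X × Y) := fun i => Prod.snd ⁻¹' {y i} with hT
  have hTmeas : ∀ i, MeasurableSet (T i) := fun i => measurable_snd (measurableSet_singleton _)
  set m : ι → Measure X := fun i => (γ.restrict (T i)).map Prod.fst with hmdef
  -- decomposition of each slice
  have hdecomp : ∀ i, γ.restrict (T i) = (m i).map (fun x => (x, y i)) := by
    intro i
    have hnullc : γ.restrict (T i) (T i)ᶜ = 0 := by
      rw [Measure.restrict_apply (hTmeas i).compl]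
      simp
    ext s hs
    rw [Measure.map_apply (hmk (y i)) hs, hmdef, Measure.map_apply measurable_fst
      (((hmk (y i)) hs))]
    have h1 : γ.restrict (T i) s = γ.restrict (T i) (s ∩ T i) :=
      (measure_inter_conull hnullc).symm
    have h2 : γ.restrict (T i) (Prod.fst ⁻¹' ((fun x => (x, y i)) ⁻¹' s))
        = γ.restrict (T i) ((Prod.fst ⁻¹' ((fun x => (x, y i)) ⁻¹' s)) ∩ T i) :=
      (measure_inter_conull hnullc).symm
    have h3 : s ∩ T i = (Prod.fst ⁻¹' ((fun x => (x, y i)) ⁻¹' s)) ∩ T i := by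
      ext p
      simp only [Set.mem_inter_iff, Set.mem_preimage, hT, Set.mem_singleton_iff]
      constructor
      · rintro ⟨hp, hp2⟩
        refine ⟨?_, hp2⟩
        have : (p.1, y i) = p := by rw [← hp2]
        rwa [this]
      · rintro ⟨hp, hp2⟩
        refine ⟨?_, hp2⟩
        have : (p.1, y i) = p := by rw [← hp2]
        rwa [this] at hp
    rw [h1, h3, ← h2]
  have hTdisj : Pairwise (Function.onFun Disjoint T) := by
    intro i j hij
    exact Disjoint.preimage _ (by simp [hy.ne hij])
  have hγsum : γ = ∑ i, γ.restrict (T i) := by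
    have hU : γ ((⋃ i, T i)ᶜ) = 0 := by
      have h1 : (⋃ i, T i)ᶜ = Prod.snd ⁻¹' ((⋃ i, ({y i} : Set Y))ᶜ) := by
        rw [Set.preimage_compl, Set.preimage_iUnion]
      have h2 : MeasurableSet ((⋃ i, ({y i} : Set Y))ᶜ) :=
        (MeasurableSet.iUnion fun i => measurableSet_singleton _).compl
      rw [h1, ← Measure.map_apply measurable_snd h2, hγ₂, hν]
      rw [Measure.finset_sum_apply]
      refine Finset.sum_eq_zero fun i _ => ?_
      rw [Measure.smul_apply, smul_eq_mul]
      have : (⋃ i, ({y i} : Set Y))ᶜ ∩ {y i} = ∅ := by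
        ext z
        simp only [Set.mem_inter_iff, Set.mem_compl_iff, Set.mem_iUnion,
          Set.mem_singleton_iff, Set.mem_empty_iff_false, iff_false, not_and]
        intro hz hz2
        exact hz ⟨i, hz2⟩
      rw [Measure.dirac_apply' _ h2]
      have : y i ∉ (⋃ i, ({y i} : Set Y))ᶜ :=
        fun h => h (Set.mem_iUnion.mpr ⟨i, rfl⟩)
      rw [Set.indicator_of_notMem this]
      simp
    have h3 := Measure.restrict_add_restrict_compl (μ := γ) (MeasurableSet.iUnion hTmeas)
    rw [Measure.restrict_eq_zero.mpr hU, add_zero] at h3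
    calc γ = γ.restrict (⋃ i, T i) := h3.symm
    _ = ∑ i, γ.restrict (T i) := by
        rw [Measure.restrict_iUnion hTdisj hTmeas, Measure.sum_fintype]
  have hμsum : μ = ∑ i, m i := by
    conv_lhs => rw [← hγ₁, hγsum]
    rw [map_finset_sum' measurable_fst]
  have hmle : ∀ i, m i ≤ μ := by
    intro i
    intro s
    rw [hμsum, Measure.finset_sum_apply]
    exact Finset.single_le_sum (f := fun j => m j s) (fun j _ => zero_le) (Finset.mem_univ i)
  have hmfin : ∀ i, IsFiniteMeasure (m i) := fun i => isFiniteMeasure_of_le μ (hmle i)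
  have hmnull : ∀ i j (_ : i ≠ j) (k : ι) (l : ℝ), m k {x | c x (y i) - c x (y j) = l} = 0 :=
    fun i j hij k l => le_antisymm ((hmle k _).trans (hccont i j hij l).le) (zero_le)
  have hpairle : ∀ i j, i ≠ j →
      (m i).map (fun x => (x, y i)) + (m j).map (fun x => (x, y j)) ≤ γ := by
    intro i j hij
    rw [← hdecomp, ← hdecomp, ← Measure.restrict_union (hTdisj hij) (hTmeas j)]
    exact Measure.restrict_le_self
  have hpair : ∀ i j, i ≠ j → ∃ l : ℝ, m i {x | l ≤ c x (y i) - c x (y j)} = 0 ∧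
      m j {x | c x (y i) - c x (y j) ≤ l} = 0 := by
    intro i j hij
    have := hmfin i; have := hmfin j
    exact pair_lemma c hc μ ν γ hγ₁ hγ₂ hopt (y i) (y j) (m i) (m j) (hpairle i j hij)
      (hmnull i j hij i) (hmnull i j hij j)
  choose l hl1 hl2 using hpair
  set A : ι → Set X := fun i => ⋂ j, ⋂ (h : i ≠ j), {x | c x (y i) - c x (y j) < l i j h}
    with hA
  have hsub : ∀ z z' : Y, Continuous fun x : X => c x z - c x z' := fun z z' =>
    (hc.comp (continuous_id.prodMk continuous_const)).sub
      (hc.comp (continuous_id.prodMk continuous_const))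
  have hAmeas : ∀ i, MeasurableSet (A i) := by
    intro i
    refine MeasurableSet.iInter fun j => MeasurableSet.iInter fun h => ?_
    exact measurableSet_lt (hsub (y i) (y j)).measurable measurable_const
  have hmA : ∀ i j, i ≠ j → m j (A i) = 0 := by
    intro i j hij
    refine le_antisymm (le_trans (measure_mono ?_) (hl2 i j hij).le) (zero_le)
    intro x hx
    have := Set.mem_iInter.mp (Set.mem_iInter.mp hx j) hij
    exact le_of_lt (Set.mem_setOf_eq ▸ this)
  have hmAc : ∀ i, m i (A i)ᶜ = 0 := by
    intro i
    have h1 : (A i)ᶜ = ⋃ j, ⋃ (h : i ≠ j), {x | l i j h ≤ c x (y i) - c x (y j)} := by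
      ext x
      simp only [hA, Set.mem_compl_iff, Set.mem_iInter, Set.mem_setOf_eq, not_forall,
        not_lt, Set.mem_iUnion]
    rw [h1]
    refine measure_iUnion_null fun j => measure_iUnion_null fun h => ?_
    exact hl1 i j h
  -- ordering on ι
  set e : ι ≃ Fin (Fintype.card ι) := Fintype.equivFin ι with he
  set r : ι → ℕ := fun i => (e i : ℕ) with hr
  have hrinj : Function.Injective r := by
    intro i j hij
    apply e.injective
    exact Fin.ext hij
  set B : ι → Set X := fun i => A i \ ⋃ k, ⋃ (_ : r k < r i), A k with hB
  have hBsub : ∀ i, B i ⊆ A i := fun i => Set.diff_subset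
  have hBmeas : ∀ i, MeasurableSet (B i) := by
    intro i
    exact (hAmeas i).diff (MeasurableSet.iUnion fun k => MeasurableSet.iUnion fun _ => hAmeas k)
  have hBdisj : Pairwise (Function.onFun Disjoint B) := by
    intro i j hij
    have hrij : r i ≠ r j := fun h => hij (hrinj h)
    rcases lt_or_gt_of_ne hrij with h | h
    · refine Set.disjoint_left.mpr fun x hxi hxj => ?_
      exact hxj.2 (Set.mem_iUnion.mpr ⟨i, Set.mem_iUnion.mpr ⟨h, hBsub i hxi⟩⟩)
    · refine Set.disjoint_left.mpr fun x hxi hxj => ?_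
      exact hxi.2 (Set.mem_iUnion.mpr ⟨j, Set.mem_iUnion.mpr ⟨h, hBsub j hxj⟩⟩)
  have hmBc : ∀ i, m i (B i)ᶜ = 0 := by
    intro i
    have h1 : (B i)ᶜ ⊆ (A i)ᶜ ∪ ⋃ k, ⋃ (_ : r k < r i), A k := by
      intro x hx
      rw [hB] at hx
      simp only [Set.mem_compl_iff, Set.mem_diff, not_and, not_not] at hx
      by_cases h2 : x ∈ A i
      · exact Or.inr (hx h2)
      · exact Or.inl h2
    refine le_antisymm (le_trans (measure_mono h1) ?_) (zero_le)
    refine le_trans (measure_union_le _ _) ?_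
    rw [hmAc i, zero_add]
    refine le_of_eq (measure_iUnion_null fun k => measure_iUnion_null fun hk => ?_)
    have hki : k ≠ i := fun h => by rw [h] at hk; exact lt_irrefl _ hk
    exact hmA k i hki
  have hmBj : ∀ i j, i ≠ j → m j (B i) = 0 := by
    intro i j hij
    exact le_antisymm (le_trans (measure_mono (hBsub i)) (hmA i j hij).le) (zero_le)
  -- the transport map
  set i₀ : ι := Classical.arbitrary ι with hi₀
  set t : X → Y := fun x => if h : ∃ i, x ∈ B i then y h.choose else y i₀ with ht
  have htB : ∀ i, ∀ x ∈ B i, t x = y i := by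
    intro i x hx
    have hex : ∃ j, x ∈ B j := ⟨i, hx⟩
    rw [ht]
    simp only [dif_pos hex]
    congr 1
    by_contra hne
    exact Set.disjoint_left.mp (hBdisj hne) hex.choose_spec hx
  have htmeas : Measurable t := by
    intro s hs
    have hset : t ⁻¹' s = (⋃ i, if y i ∈ s then B i else ∅) ∪
        ((⋃ i, B i)ᶜ ∩ (if y i₀ ∈ s then Set.univ else ∅)) := by
      ext x
      by_cases hx : ∃ i, x ∈ B i
      · obtain ⟨i, hi⟩ := hx
        have htx : t x = y i := htB i x hi
        constructor
        · intro hs'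
          rw [Set.mem_preimage, htx] at hs'
          exact Or.inl (Set.mem_iUnion.mpr ⟨i, by rw [if_pos hs']; exact hi⟩)
        · rintro (h | h)
          · obtain ⟨j, hj⟩ := Set.mem_iUnion.mp h
            by_cases hys : y j ∈ s
            · rw [if_pos hys] at hj
              have : j = i := by
                by_contra hne
                exact Set.disjoint_left.mp (hBdisj hne) hj hi
              rw [Set.mem_preimage, htx, ← this]
              exact hys
            · rw [if_neg hys] at hj
              exact absurd hj (Set.notMem_empty x)
          · exact absurd (Set.mem_iUnion.mpr ⟨i, hi⟩) h.1
      · have htx : t x = y i₀ := by rw [ht]; simp only [dif_neg hx]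
        have hxB : x ∈ (⋃ i, B i)ᶜ := by
          simp only [Set.mem_compl_iff, Set.mem_iUnion]
          exact hx
        constructor
        · intro hs'
          rw [Set.mem_preimage, htx] at hs'
          exact Or.inr ⟨hxB, by rw [if_pos hs']; exact Set.mem_univ x⟩
        · rintro (h | h)
          · obtain ⟨j, hj⟩ := Set.mem_iUnion.mp h
            by_cases hys : y j ∈ s
            · rw [if_pos hys] at hj
              exact absurd ⟨j, hj⟩ hx
            · rw [if_neg hys] at hj
              exact absurd hj (Set.notMem_empty x)
          · by_cases hys : y i₀ ∈ s
            · rw [Set.mem_preimage, htx]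
              exact hys
            · rw [if_neg hys] at h
              exact absurd h.2 (Set.notMem_empty x)
    rw [hset]
    refine MeasurableSet.union ?_ ?_
    · refine MeasurableSet.iUnion fun i => ?_
      by_cases hys : y i ∈ s
      · rw [if_pos hys]; exact hBmeas i
      · rw [if_neg hys]; exact MeasurableSet.empty
    · refine MeasurableSet.inter (MeasurableSet.iUnion hBmeas).compl ?_
      by_cases hys : y i₀ ∈ s
      · rw [if_pos hys]; exact MeasurableSet.univ
      · rw [if_neg hys]; exact MeasurableSet.empty
  -- μ-a.e. covered by B's
  have hμBc : μ ((⋃ i, B i)ᶜ) = 0 := by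
    rw [hμsum, Measure.finset_sum_apply]
    refine Finset.sum_eq_zero fun i _ => ?_
    refine le_antisymm (le_trans (measure_mono ?_) (hmBc i).le) (zero_le)
    exact Set.compl_subset_compl.mpr (Set.subset_iUnion B i)
  have hrB : ∀ i, μ.restrict (B i) = m i := by
    intro i
    ext s hs
    rw [Measure.restrict_apply hs, hμsum, Measure.finset_sum_apply]
    have hterm : ∀ j, j ≠ i → m j (s ∩ B i) = 0 := by
      intro j hj
      exact le_antisymm (le_trans (measure_mono Set.inter_subset_right)
        (hmBj i j hj.symm).le) (zero_le)
    rw [Finset.sum_eq_single i (fun j _ hj => hterm j hj) (fun h => absurd (Finset.mem_univ i) h)]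
    exact measure_inter_conull (hmBc i)
  -- conclusion
  have hgmeas : Measurable fun x => (x, t x) := measurable_id.prodMk htmeas
  have hmapeq : γ = μ.map fun x => (x, t x) := by
    have h0 : μ.restrict (⋃ i, B i) + μ.restrict (⋃ i, B i)ᶜ = μ :=
      Measure.restrict_add_restrict_compl (MeasurableSet.iUnion hBmeas)
    rw [Measure.restrict_eq_zero.mpr hμBc, add_zero] at h0
    have h1 : μ = ∑ i, m i := hμsum
    have h2 : μ.map (fun x => (x, t x)) = ∑ i, (m i).map (fun x => (x, t x)) := by
      conv_lhs => rw [← h0, Measure.restrict_iUnion hBdisj hBmeas, Measure.sum_fintype]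
      rw [map_finset_sum' hgmeas]
      exact Finset.sum_congr rfl fun i _ => by rw [hrB i]
    have h3 : ∀ i, (m i).map (fun x => (x, t x)) = (m i).map (fun x => (x, y i)) := by
      intro i
      refine Measure.map_congr ?_
      have : ∀ᵐ x ∂(m i), x ∈ B i := by
        rw [MeasureTheory.ae_iff]
        exact hmBc i
      exact this.mono fun x hx => by
        show (x, t x) = (x, y i)
        rw [htB i x hx]
    rw [h2]
    conv_lhs => rw [hγsum]
    refine Finset.sum_congr rfl fun i _ => ?_
    rw [hdecomp i, h3 i]
  refine ⟨t, htmeas, ?_, hmapeq⟩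
  rw [← hγ₂, hmapeq, Measure.map_map measurable_snd hgmeas]
  rfl
end
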